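/- arXiv:2511.14785 — 3 statements merged into one kernel-verified Lean document; each statement's English description precedes it below -/
import Mathlib

section
/- The rotation symmetry group of the rhombicuboctahedron has order 24: the set of matrices A in SO(3) (real 3×3 orthogonal matrices with determinant 1) satisfying A(V) = V (i.e., the image of the set V under the linear map A equals V) has exactly 24 elements. -/
noncomputable def base : Fin 3 → ℝ := ![1, 1, 1 + Real.sqrt 2]

/-- The vertex set of the rhombicuboctahedron with edge length 2 centered at the origin:
all points whose coordinates are, in some order, `±1, ±1, ±(1 + √2)`
(all coordinate permutations combined with all choices of signs). -/
def V : Set (EuclideanSpace ℝ (Fin 3)) :=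
  {v | ∃ σ : Equiv.Perm (Fin 3), ∃ ε : Fin 3 → ℝ,
    (∀ i, ε i = 1 ∨ ε i = -1) ∧ ∀ i, v i = ε i * base (σ i)}

/-- The action of a 3×3 real matrix on ℝ³ (as `EuclideanSpace ℝ (Fin 3)`). -/
def act (A : Matrix (Fin 3) (Fin 3) ℝ) (v : EuclideanSpace ℝ (Fin 3)) :
    EuclideanSpace ℝ (Fin 3) := WithLp.toLp 2 (A.mulVec v)

noncomputable def cc : ℝ := 1 + Real.sqrt 2

lemma sq2 : Real.sqrt 2 * Real.sqrt 2 = 2 := Real.mul_self_sqrt (by norm_num)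

lemma s2pos : (0:ℝ) < Real.sqrt 2 := Real.sqrt_pos.mpr (by norm_num)

lemma cc_pos : (0:ℝ) < cc := by have := s2pos; unfold cc; linarith

lemma base0 : base 0 = 1 := rfl
lemma base1 : base 1 = 1 := rfl
lemma base2 : base 2 = cc := rfl

lemma base_of_ne (k : Fin 3) (h : k ≠ 2) : base k = 1 := by
  fin_cases k
  · rfl
  · rfl
  · simp at h

lemma mem_V_iff (v : EuclideanSpace ℝ (Fin 3)) :
    v ∈ V ↔ ∃ j, (v j = cc ∨ v j = -cc) ∧ ∀ i, i ≠ j → (v i = 1 ∨ v i = -1) := by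
  constructor
  · rintro ⟨σ, ε, hε, hv⟩
    refine ⟨σ.symm 2, ?_, ?_⟩
    · have h2 : v (σ.symm 2) = ε (σ.symm 2) * cc := by
        rw [hv, Equiv.apply_symm_apply, base2]
      rcases hε (σ.symm 2) with h | h <;> rw [h2, h] <;> [left; right] <;> ring
    · intro i hi
      have hne : σ i ≠ 2 := fun h => hi (by rw [← h, Equiv.symm_apply_apply])
      have : v i = ε i * 1 := by rw [hv, base_of_ne _ hne]
      rcases hε i with h | h <;> rw [this, h] <;> [left; right] <;> ring
  · rintro ⟨j, hj, hrest⟩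
    have hbpos : ∀ k, (0:ℝ) < base k := by
      intro k; fin_cases k
      · exact one_pos
      · exact one_pos
      · exact cc_pos
    refine ⟨Equiv.swap j 2, fun i => v i / base (Equiv.swap j 2 i), ?_, ?_⟩
    · intro i
      dsimp only
      have hcc : cc ≠ 0 := ne_of_gt cc_pos
      by_cases h : i = j
      · subst h
        rw [Equiv.swap_apply_left, base2]
        rcases hj with h | h
        · left; rw [h, div_self hcc]
        · right; rw [h, neg_div, div_self hcc]
      · have hb1 : base (Equiv.swap j 2 i) = 1 := by
          by_cases h2 : i = (2 : Fin 3)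
          · subst h2
            rw [Equiv.swap_apply_right]
            exact base_of_ne j (fun hj2 => h hj2.symm)
          · rw [Equiv.swap_apply_of_ne_of_ne h h2]
            exact base_of_ne i h2
        rw [hb1, div_one]
        exact hrest i h
    · intro i
      exact (div_mul_cancel₀ _ (ne_of_gt (hbpos _))).symm

open Matrix in
noncomputable def Mat (σ : Equiv.Perm (Fin 3)) (ε : Fin 3 → ℝ) : Matrix (Fin 3) (Fin 3) ℝ :=
  Matrix.diagonal ε * σ.permMatrix ℝ

lemma Mat_apply (σ : Equiv.Perm (Fin 3)) (ε : Fin 3 → ℝ) (i j : Fin 3) :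
    Mat σ ε i j = ε i * if σ i = j then 1 else 0 := by
  simp only [Mat, Matrix.mul_apply, Matrix.diagonal, Equiv.Perm.permMatrix, PEquiv.toMatrix,
    Equiv.toPEquiv, Option.mem_def, Equiv.toFun_as_coe, Option.some.injEq, Matrix.of_apply]
  rw [Finset.sum_eq_single i]
  · by_cases hs : σ i = j <;> simp [hs]
  · intro b _ hb
    simp [Ne.symm hb]
  · simp

lemma act_Mat (σ : Equiv.Perm (Fin 3)) (ε : Fin 3 → ℝ) (v : EuclideanSpace ℝ (Fin 3)) :
    act (Mat σ ε) v = fun i => ε i * v (σ i) := by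
  funext i
  show (Matrix.mulVec (Mat σ ε) (WithLp.ofLp v)) i = _
  simp only [Matrix.mulVec, dotProduct, Mat_apply]
  rw [Finset.sum_eq_single (σ i)]
  · simp
  · intro b _ hb; simp [Ne.symm hb]
  · intro h; exact absurd (Finset.mem_univ _) h

lemma Mat_mem_V (σ : Equiv.Perm (Fin 3)) (ε : Fin 3 → ℝ) (hε : ∀ i, ε i = 1 ∨ ε i = -1)
    (v : EuclideanSpace ℝ (Fin 3)) (hv : v ∈ V) : act (Mat σ ε) v ∈ V := by
  rw [mem_V_iff] at hv ⊢
  obtain ⟨j, hj, hrest⟩ := hv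
  rw [act_Mat]
  refine ⟨σ.symm j, ?_, ?_⟩
  · have hs : σ (σ.symm j) = j := Equiv.apply_symm_apply σ j
    dsimp only
    rw [hs]
    rcases hε (σ.symm j) with h | h <;> rcases hj with h2 | h2 <;> rw [h, h2]
    · left; ring
    · right; ring
    · right; ring
    · left; ring
  · intro i hi
    show ε i * v (σ i) = 1 ∨ ε i * v (σ i) = -1
    have : σ i ≠ j := fun h => hi (by rw [← h, Equiv.symm_apply_apply])
    rcases hε i with h | h <;> rcases hrest (σ i) this with h2 | h2 <;> rw [h, h2]
    · left; ring
    · right; ring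
    · right; ring
    · left; ring

lemma Mat_mul (σ τ : Equiv.Perm (Fin 3)) (ε η : Fin 3 → ℝ)
    (v : EuclideanSpace ℝ (Fin 3)) :
    act (Mat σ ε) (act (Mat τ η) v) = fun i => ε i * (η (σ i) * v (τ (σ i))) := by
  rw [act_Mat, act_Mat]

lemma Mat_image (σ : Equiv.Perm (Fin 3)) (ε : Fin 3 → ℝ) (hε : ∀ i, ε i = 1 ∨ ε i = -1) :
    act (Mat σ ε) '' V = V := by
  apply Set.Subset.antisymm
  · rintro w ⟨v, hv, rfl⟩
    exact Mat_mem_V σ ε hε v hv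
  · intro w hw
    refine ⟨act (Mat σ.symm (fun i => ε (σ.symm i))) w,
      Mat_mem_V _ _ (fun i => hε _) w hw, ?_⟩
    rw [← (WithLp.ofLp_injective 2).eq_iff, Mat_mul]
    funext i
    have hs : σ.symm (σ i) = i := Equiv.symm_apply_apply σ i
    dsimp only
    rw [hs]
    rcases hε i with h | h <;> rw [h] <;> ring

open Matrix in
lemma Mat_orth (σ : Equiv.Perm (Fin 3)) (ε : Fin 3 → ℝ) (hε : ∀ i, ε i = 1 ∨ ε i = -1) :
    (Mat σ ε)ᵀ * Mat σ ε = 1 := by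
  ext a b
  rw [Matrix.mul_apply]
  simp only [Matrix.transpose_apply, Mat_apply]
  rw [Finset.sum_eq_single (σ.symm a)]
  · rw [Equiv.apply_symm_apply]
    by_cases hab : a = b
    · subst hab
      simp only [if_pos rfl, Matrix.one_apply_eq]
      rcases hε (σ.symm a) with h | h <;> rw [h] <;> norm_num
    · rw [if_neg hab, Matrix.one_apply_ne (fun h => hab h)]
      ring
  · intro i _ hi
    have : σ i ≠ a := fun h => hi (by rw [← h, Equiv.symm_apply_apply])
    rw [if_neg this]
    ring
  · simp

lemma Mat_det (σ : Equiv.Perm (Fin 3)) (ε : Fin 3 → ℝ) :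
    (Mat σ ε).det = (ε 0 * ε 1 * ε 2) * ((Equiv.Perm.sign σ : ℤ) : ℝ) := by
  rw [Mat, Matrix.det_mul, Matrix.det_diagonal, Matrix.det_permutation, Fin.prod_univ_three]

open Matrix in
lemma dot_pres (A : Matrix (Fin 3) (Fin 3) ℝ) (h : Aᵀ * A = 1) (x y : Fin 3 → ℝ) :
    A.mulVec x ⬝ᵥ A.mulVec y = x ⬝ᵥ y := by
  rw [Matrix.dotProduct_mulVec, ← Matrix.mulVec_transpose, Matrix.mulVec_mulVec, h,
    Matrix.one_mulVec]

open Matrix in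
lemma orth_iff (A : Matrix (Fin 3) (Fin 3) ℝ) :
    A ∈ Matrix.orthogonalGroup (Fin 3) ℝ ↔ Aᵀ * A = 1 := by
  rw [Matrix.mem_orthogonalGroup_iff, mul_eq_one_comm]

lemma cc_def : cc = 1 + Real.sqrt 2 := rfl

lemma cc_sq : cc^2 = 3 + 2*Real.sqrt 2 := by rw [cc_def]; linear_combination sq2

lemma pm_mul {x y : ℝ} (hx : x = 1 ∨ x = -1) (hy : y = 1 ∨ y = -1) :
    (x * y = 1 ∧ y = x) ∨ (x * y = -1 ∧ y = -x) := by
  rcases hx with h | h <;> rcases hy with h2 | h2 <;> rw [h, h2] <;> norm_num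

lemma pmc_mul {x y : ℝ} (hx : x = cc ∨ x = -cc) (hy : y = cc ∨ y = -cc) :
    (x * y = cc^2 ∧ y = x) ∨ (x * y = -cc^2 ∧ y = -x) := by
  rcases hx with h | h <;> rcases hy with h2 | h2 <;> rw [h, h2] <;>
    [left; right; right; left] <;> constructor <;> ring

lemma pmc1 {x y : ℝ} (hx : x = cc ∨ x = -cc) (hy : y = 1 ∨ y = -1) :
    (x * y = cc ∧ x = y * cc) ∨ (x * y = -cc ∧ x = -(y * cc)) := by
  rcases hx with h | h <;> rcases hy with h2 | h2 <;> rw [h, h2] <;>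
    [left; right; right; left] <;> constructor <;> ring

lemma p1c {x y : ℝ} (hx : x = 1 ∨ x = -1) (hy : y = cc ∨ y = -cc) :
    (x * y = cc ∧ y = x * cc) ∨ (x * y = -cc ∧ y = -(x * cc)) := by
  rcases hx with h | h <;> rcases hy with h2 | h2 <;> rw [h, h2] <;>
    [left; right; right; left] <;> constructor <;> ring

lemma fin3_resolve (k l m i : Fin 3) (hkl : k ≠ l) (hkm : k ≠ m) (hlm : l ≠ m)
    (hi : i ≠ k) : i = l ∨ i = m := by
  revert hkl hkm hlm hi; revert k l m i; decide

lemma fin3_others (j : Fin 3) : ∃ l m, j ≠ l ∧ j ≠ m ∧ l ≠ m := by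
  revert j; decide

lemma fin3_third (j j' : Fin 3) (h : j ≠ j') : ∃ m, m ≠ j ∧ m ≠ j' := by
  revert h; revert j j'; decide

lemma sum3 (f : Fin 3 → ℝ) (k l m : Fin 3) (hkl : k ≠ l) (hkm : k ≠ m) (hlm : l ≠ m) :
    ∑ i, f i = f k + f l + f m := by
  have huniv : (Finset.univ : Finset (Fin 3)) = {k, l, m} := by
    revert hkl hkm hlm; revert k l m; decide
  rw [huniv, Finset.sum_insert (by simp [hkl, hkm]),
    Finset.sum_insert (by simp [hlm]), Finset.sum_singleton, add_assoc]

lemma same_case (w w' : EuclideanSpace ℝ (Fin 3)) (k l m : Fin 3)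
    (hwk : w k = cc ∨ w k = -cc) (hw'k : w' k = cc ∨ w' k = -cc)
    (hwl : w l = 1 ∨ w l = -1) (hw'l : w' l = 1 ∨ w' l = -1)
    (hwm : w m = 1 ∨ w m = -1) (hw'm : w' m = 1 ∨ w' m = -1)
    (hdot : w k * w' k + w l * w' l + w m * w' m = 1 + 2*Real.sqrt 2) :
    w' k = w k ∧ w' l = -w l ∧ w' m = -w m := by
  rcases pmc_mul hwk hw'k with ⟨hp, he⟩ | ⟨hp, he⟩ <;>
    rcases pm_mul hwl hw'l with ⟨hp1, he1⟩ | ⟨hp1, he1⟩ <;>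
    rcases pm_mul hwm hw'm with ⟨hp2, he2⟩ | ⟨hp2, he2⟩ <;>
    rw [hp, hp1, hp2] at hdot <;>
    first
      | (exact ⟨he, he1, he2⟩)
      | (exfalso; nlinarith [cc_sq, s2pos, sq2])

lemma mixed_case (w w' : EuclideanSpace ℝ (Fin 3)) (k l m : Fin 3)
    (hkl : k ≠ l) (hkm : k ≠ m) (hlm : l ≠ m)
    (hwk : w k = cc ∨ w k = -cc) (hw'l : w' l = cc ∨ w' l = -cc)
    (hwl : w l = 1 ∨ w l = -1) (hwm : w m = 1 ∨ w m = -1)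
    (hw'k : w' k = 1 ∨ w' k = -1) (hw'm : w' m = 1 ∨ w' m = -1)
    (hdot : w k * w' k + w l * w' l + w m * w' m = 1 + 2*Real.sqrt 2)
    (hno : ∀ u : EuclideanSpace ℝ (Fin 3), u ∈ V →
      (∑ i, u i * (w i + w' i)) ≠ 4 + 2*Real.sqrt 2) : False := by
  rcases pmc1 hwk hw'k with ⟨hp, he⟩ | ⟨hp, he⟩ <;>
    rcases p1c hwl hw'l with ⟨hp1, he1⟩ | ⟨hp1, he1⟩ <;>
    rcases pm_mul hwm hw'm with ⟨hp2, he2⟩ | ⟨hp2, he2⟩ <;>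
    rw [hp, hp1, hp2] at hdot
  case inl.inl.inl =>
    exfalso
    rw [cc_def] at hdot
    linarith [s2pos]
  case inl.inl.inr =>
    -- the surviving case: construct u
    set u : EuclideanSpace ℝ (Fin 3) :=
      WithLp.toLp 2 (fun i => if i = m then cc else if i = k then w' k else w l) with hu
    have huV : u ∈ V := by
      rw [mem_V_iff]
      refine ⟨m, ?_, ?_⟩
      · left; simp [hu]
      · intro i hi
        by_cases hik : i = k
        · subst hik
          simpa [hu, hi] using hw'k
        · simpa [hu, hi, hik] using hwl
    apply hno u huV
    rw [sum3 _ k l m hkl hkm hlm]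
    have huk : u k = w' k := by simp [hu, hkm]
    have hul : u l = w l := by simp [hu, hlm, Ne.symm hkl]
    have hum : u m = cc := by simp [hu]
    rw [huk, hul, hum, he, he1, he2]
    rcases hw'k with h1 | h1 <;> rcases hwl with h2 | h2 <;> rw [h1, h2, cc_def] <;> ring
  all_goals (exfalso; rw [cc_def] at hdot; linarith [s2pos])

open Matrix in
lemma diag_pair (w w' : EuclideanSpace ℝ (Fin 3)) (hw : w ∈ V) (hw' : w' ∈ V)
    (hdot : (w : Fin 3 → ℝ) ⬝ᵥ (w' : Fin 3 → ℝ) = 1 + 2*Real.sqrt 2)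
    (hno : ∀ u : EuclideanSpace ℝ (Fin 3), u ∈ V →
      (∑ i, u i * (w i + w' i)) ≠ 4 + 2*Real.sqrt 2) :
    ∃ k, (w k = cc ∨ w k = -cc) ∧ w' k = w k ∧ ∀ i, i ≠ k → w' i = -w i := by
  rw [mem_V_iff] at hw hw'
  obtain ⟨j, hj, hr⟩ := hw
  obtain ⟨j', hj', hr'⟩ := hw'
  have hdots : ∑ i, w i * w' i = 1 + 2*Real.sqrt 2 := hdot
  by_cases hjj : j' = j
  · subst hjj
    obtain ⟨l, m, hjl, hjm, hlm⟩ := fin3_others j'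
    rw [sum3 _ j' l m hjl hjm hlm] at hdots
    obtain ⟨h1, h2, h3⟩ := same_case w w' j' l m hj hj'
      (hr l (Ne.symm hjl)) (hr' l (Ne.symm hjl)) (hr m (Ne.symm hjm)) (hr' m (Ne.symm hjm)) hdots
    refine ⟨j', hj, h1, fun i hi => ?_⟩
    rcases fin3_resolve j' l m i hjl hjm hlm hi with rfl | rfl
    · exact h2
    · exact h3
  · exfalso
    obtain ⟨m, hmj, hmj'⟩ := fin3_third j j' (fun h => hjj h.symm)
    rw [sum3 _ j j' m (fun h => hjj h.symm) (Ne.symm hmj) (Ne.symm hmj')] at hdots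
    exact mixed_case w w' j j' m (fun h => hjj h.symm) (Ne.symm hmj) (Ne.symm hmj')
      hj hj' (hr j' hjj) (hr m hmj) (hr' j (fun h => hjj (h ▸ rfl))) (hr' m hmj') hdots hno

lemma cc_ne : cc ≠ 0 := ne_of_gt cc_pos

open Matrix in
lemma hard (A : Matrix (Fin 3) (Fin 3) ℝ) (hA : Aᵀ * A = 1) (himg : act A '' V = V) :
    ∃ (σ : Equiv.Perm (Fin 3)) (ε : Fin 3 → ℝ), (∀ i, ε i = 1 ∨ ε i = -1) ∧ A = Mat σ ε := by
  have hcol : ∀ i : Fin 3, ∃ (k : Fin 3) (s : ℝ), (s = 1 ∨ s = -1) ∧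
      ∀ t, A t i = if t = k then s else 0 := by
    intro i
    set v : EuclideanSpace ℝ (Fin 3) := WithLp.toLp 2 (fun t => if t = i then cc else 1) with hv
    set v' : EuclideanSpace ℝ (Fin 3) := WithLp.toLp 2 (fun t => if t = i then cc else -1) with hv'
    have hvV : v ∈ V := by
      rw [mem_V_iff]
      refine ⟨i, ?_, fun t ht => ?_⟩
      · left; show (if i = i then cc else 1) = cc; simp
      · left; show (if t = i then cc else 1) = 1; simp [ht]
    have hv'V : v' ∈ V := by
      rw [mem_V_iff]
      refine ⟨i, ?_, fun t ht => ?_⟩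
      · left; show (if i = i then cc else -1) = cc; simp
      · right; show (if t = i then cc else -1) = -1; simp [ht]
    set w := act A v with hw
    set w' := act A v' with hw'
    have hwV : w ∈ V := himg ▸ ⟨v, hvV, rfl⟩
    have hw'V : w' ∈ V := himg ▸ ⟨v', hv'V, rfl⟩
    have hsum : ∀ t, v t + v' t = if t = i then 2*cc else 0 := by
      intro t
      show (if t = i then cc else 1) + (if t = i then cc else -1) = _
      by_cases h : t = i <;> simp [h] <;> ring
    have hdot : (w : Fin 3 → ℝ) ⬝ᵥ (w' : Fin 3 → ℝ) = 1 + 2*Real.sqrt 2 := by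
      rw [hw, hw']
      show (A.mulVec v) ⬝ᵥ (A.mulVec v') = _
      rw [dot_pres A hA]
      show ∑ t, v t * v' t = _
      have h1 : ∀ t, v t * v' t = if t = i then cc*cc else -1 := by
        intro t
        show (if t = i then cc else 1) * (if t = i then cc else -1) = _
        by_cases h : t = i <;> simp [h]
      simp only [h1]
      rw [Fin.sum_univ_three]
      fin_cases i <;> simp <;> rw [cc_def] <;> linear_combination sq2
    have hWsum : ∀ t, w t + w' t = 2*cc * A t i := by
      intro t
      have : w t + w' t = (A.mulVec (fun s => v s + v' s)) t := by
        have : (fun s => v s + v' s) = (v : Fin 3 → ℝ) + (v' : Fin 3 → ℝ) := rfl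
        rw [this, Matrix.mulVec_add]
        rfl
      rw [this]
      show ∑ s, A t s * (v s + v' s) = _
      simp only [hsum]
      rw [Finset.sum_eq_single i]
      · rw [if_pos rfl]; ring
      · intro b _ hb; rw [if_neg hb]; ring
      · simp
    have hno : ∀ u : EuclideanSpace ℝ (Fin 3), u ∈ V →
        (∑ t, u t * (w t + w' t)) ≠ 4 + 2*Real.sqrt 2 := by
      intro u hu
      rw [← himg] at hu
      obtain ⟨u₀, hu₀, rfl⟩ := hu
      have heq : ∑ t, (act A u₀) t * (w t + w' t)
          = u₀ i * (2*cc) := by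
        have h2 : ∀ t, w t + w' t = (A.mulVec (fun s => v s + v' s)) t := by
          intro t
          rw [hWsum t]
          show _ = ∑ s, A t s * (v s + v' s)
          simp only [hsum]
          rw [Finset.sum_eq_single i]
          · rw [if_pos rfl]; ring
          · intro b _ hb; rw [if_neg hb]; ring
          · simp
        simp only [h2]
        have h3 : (∑ t, (act A u₀) t * (A.mulVec (fun s => v s + v' s)) t)
            = (A.mulVec u₀) ⬝ᵥ (A.mulVec (fun s => v s + v' s)) := rfl
        rw [h3, dot_pres A hA]
        show ∑ s, u₀ s * (v s + v' s) = _
        simp only [hsum]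
        rw [Finset.sum_eq_single i]
        · rw [if_pos rfl]
        · intro b _ hb; rw [if_neg hb]; ring
        · simp
      rw [heq]
      rw [mem_V_iff] at hu₀
      obtain ⟨j₀, hj₀, hr₀⟩ := hu₀
      by_cases hij : i = j₀
      · subst hij
        rcases hj₀ with h | h <;> rw [h, cc_def] <;> intro hcon <;> nlinarith [sq2, s2pos]
      · rcases hr₀ i hij with h | h <;> rw [h, cc_def] <;> intro hcon <;> nlinarith [sq2, s2pos]
    obtain ⟨k, hk, hkeq, hrest⟩ := diag_pair w w' hwV hw'V hdot hno
    refine ⟨k, w k / cc, ?_, ?_⟩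
    · rcases hk with h | h <;> rw [h]
      · left; exact div_self cc_ne
      · right; rw [neg_div, div_self cc_ne]
    · intro t
      have h1 : 2*cc * A t i = if t = k then 2 * w k else 0 := by
        rw [← hWsum t]
        by_cases h : t = k
        · subst h; rw [if_pos rfl, hkeq]; ring
        · rw [if_neg h, hrest t h]; ring
      by_cases h : t = k
      · rw [if_pos h]
        rw [if_pos h] at h1
        rw [eq_div_iff cc_ne]
        linear_combination h1 / 2
      · rw [if_neg h]
        rw [if_neg h] at h1
        have h2 : cc * A t i = 0 := by linarith
        rcases mul_eq_zero.mp h2 with h3 | h3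
        · exact absurd h3 cc_ne
        · exact h3
  choose k sg hsg hcols using hcol
  have hinj : Function.Injective k := by
    intro a b hab
    by_contra hne
    have h0 : (Aᵀ * A) a b = (1 : Matrix (Fin 3) (Fin 3) ℝ) a b := by rw [hA]
    rw [Matrix.one_apply_ne hne, Matrix.mul_apply] at h0
    simp only [Matrix.transpose_apply] at h0
    rw [Finset.sum_congr rfl (fun t _ => by rw [hcols a t, hcols b t, hab])] at h0
    rw [Finset.sum_eq_single (k b)] at h0
    · rw [if_pos rfl] at h0
      rcases hsg a with h | h <;> rcases hsg b with h2 | h2 <;> rw [h, h2] at h0 <;> norm_num at h0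
    · intro t _ ht; rw [if_neg ht]; ring
    · simp
  have hbij := Finite.injective_iff_bijective.mp hinj
  set σ0 : Equiv.Perm (Fin 3) := Equiv.ofBijective k hbij with hσ0
  have hσ0k : ∀ i, σ0 i = k i := fun i => rfl
  refine ⟨σ0.symm, fun t => sg (σ0.symm t), fun t => hsg _, ?_⟩
  ext t i
  rw [Mat_apply, hcols i t]
  by_cases h : t = k i
  · have hs : σ0.symm t = i := by rw [h, ← hσ0k, Equiv.symm_apply_apply]
    rw [if_pos h, hs, if_pos rfl, mul_one]
  · have hs : σ0.symm t ≠ i := fun hh => h (by rw [← hσ0k i, ← hh, Equiv.apply_symm_apply])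
    rw [if_neg h, if_neg hs, mul_zero]

lemma Mat_inj {σ σ' : Equiv.Perm (Fin 3)} {ε ε' : Fin 3 → ℝ} (hε : ∀ i, ε i ≠ 0)
    (h : Mat σ ε = Mat σ' ε') : σ = σ' ∧ ε = ε' := by
  have key : ∀ i, σ i = σ' i ∧ ε i = ε' i := by
    intro i
    have h1 := congrFun (congrFun h i) (σ i)
    rw [Mat_apply, Mat_apply, if_pos rfl, mul_one] at h1
    by_cases hs : σ' i = σ i
    · rw [if_pos hs, mul_one] at h1
      exact ⟨hs.symm, h1⟩
    · rw [if_neg hs, mul_zero] at h1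
      exact absurd h1 (hε i)
  exact ⟨Equiv.ext fun i => (key i).1, funext fun i => (key i).2⟩

noncomputable def gvec (σ : Equiv.Perm (Fin 3)) (b1 b2 : Bool) : Fin 3 → ℝ :=
  ![(if b1 then (1:ℝ) else -1), (if b2 then (1:ℝ) else -1),
    ((Equiv.Perm.sign σ : ℤ) : ℝ) * (if b1 then (1:ℝ) else -1) * (if b2 then (1:ℝ) else -1)]

lemma sign_pm (σ : Equiv.Perm (Fin 3)) :
    ((Equiv.Perm.sign σ : ℤ) : ℝ) = 1 ∨ ((Equiv.Perm.sign σ : ℤ) : ℝ) = -1 := by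
  rcases Int.units_eq_one_or (Equiv.Perm.sign σ) with h | h <;> rw [h] <;> norm_num

lemma gvec_pm (σ : Equiv.Perm (Fin 3)) (b1 b2 : Bool) :
    ∀ i, gvec σ b1 b2 i = 1 ∨ gvec σ b1 b2 i = -1 := by
  intro i
  fin_cases i <;> rcases sign_pm σ with hs | hs <;> cases b1 <;> cases b2 <;>
    simp [gvec, hs] <;> norm_num [hs]

noncomputable def gmap (p : Equiv.Perm (Fin 3) × Bool × Bool) : Matrix (Fin 3) (Fin 3) ℝ :=
  Mat p.1 (gvec p.1 p.2.1 p.2.2)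

lemma gvec0 (σ : Equiv.Perm (Fin 3)) (b1 b2 : Bool) :
    gvec σ b1 b2 0 = if b1 then (1:ℝ) else -1 := rfl
lemma gvec1 (σ : Equiv.Perm (Fin 3)) (b1 b2 : Bool) :
    gvec σ b1 b2 1 = if b2 then (1:ℝ) else -1 := rfl
lemma gvec2 (σ : Equiv.Perm (Fin 3)) (b1 b2 : Bool) :
    gvec σ b1 b2 2 = ((Equiv.Perm.sign σ : ℤ) : ℝ)
      * (if b1 then (1:ℝ) else -1) * (if b2 then (1:ℝ) else -1) := rfl

lemma gmap_det (p : Equiv.Perm (Fin 3) × Bool × Bool) : (gmap p).det = 1 := by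
  obtain ⟨σ, b1, b2⟩ := p
  rw [gmap, Mat_det, gvec0, gvec1, gvec2]
  rcases sign_pm σ with hs | hs <;> cases b1 <;> cases b2 <;> rw [hs] <;> norm_num

lemma gmap_inj : Function.Injective gmap := by
  rintro ⟨σ, b1, b2⟩ ⟨σ', b1', b2'⟩ h
  have hne : ∀ i, gvec σ b1 b2 i ≠ 0 := by
    intro i; rcases gvec_pm σ b1 b2 i with h2 | h2 <;> rw [h2] <;> norm_num
  obtain ⟨hσ, hv⟩ := Mat_inj hne h
  subst hσ
  have h0 := congrFun hv 0
  have h1 := congrFun hv 1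
  rw [gvec0, gvec0] at h0
  rw [gvec1, gvec1] at h1
  have hb1 : b1 = b1' := by cases b1 <;> cases b1' <;> revert h0 <;> norm_num
  have hb2 : b2 = b2' := by cases b2 <;> cases b2' <;> revert h1 <;> norm_num
  rw [hb1, hb2]

/-- The rotation symmetry group of the rhombicuboctahedron has order 24:
there are exactly 24 matrices `A` in SO(3) with `A(V) = V`. -/
theorem rhombicuboctahedron_rotation_group_card :
    {A : Matrix (Fin 3) (Fin 3) ℝ | A ∈ Matrix.orthogonalGroup (Fin 3) ℝ ∧ A.det = 1 ∧
      act A '' V = V}.ncard = 24 := by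
  have hset : {A : Matrix (Fin 3) (Fin 3) ℝ | A ∈ Matrix.orthogonalGroup (Fin 3) ℝ ∧ A.det = 1 ∧
      act A '' V = V}
      = ↑((Finset.univ : Finset (Equiv.Perm (Fin 3) × Bool × Bool)).image gmap) := by
    ext A
    simp only [Set.mem_setOf_eq, Finset.coe_image, Set.mem_image, Finset.mem_coe,
      Finset.mem_univ, true_and]
    constructor
    · rintro ⟨hOrth, hdet, himg⟩
      obtain ⟨σ, ε, hε, rfl⟩ := hard A ((orth_iff A).mp hOrth) himg
      rw [Mat_det] at hdet
      have hb2 : ε 2 = ((Equiv.Perm.sign σ : ℤ) : ℝ) * ε 0 * ε 1 := by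
        rcases sign_pm σ with hs | hs <;> rcases hε 0 with h0 | h0 <;>
          rcases hε 1 with h1 | h1 <;> rcases hε 2 with h2 | h2 <;>
          rw [hs, h0, h1, h2] at hdet ⊢ <;> revert hdet <;> norm_num
      have key : ∀ b1 b2 : Bool, (if b1 then (1:ℝ) else -1) = ε 0 →
          (if b2 then (1:ℝ) else -1) = ε 1 → gvec σ b1 b2 = ε := by
        intro b1 b2 e1 e2
        funext t
        fin_cases t
        · exact e1
        · exact e2
        · exact (by rw [gvec2, e1, e2, hb2] : gvec σ b1 b2 2 = ε 2)
      rcases hε 0 with h0 | h0 <;> rcases hε 1 with h1 | h1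
      · exact ⟨(σ, true, true), by rw [gmap, key true true (by simp [h0]) (by simp [h1])]⟩
      · exact ⟨(σ, true, false), by rw [gmap, key true false (by simp [h0]) (by simp [h1])]⟩
      · exact ⟨(σ, false, true), by rw [gmap, key false true (by simp [h0]) (by simp [h1])]⟩
      · exact ⟨(σ, false, false), by rw [gmap, key false false (by simp [h0]) (by simp [h1])]⟩
    · rintro ⟨p, rfl⟩
      obtain ⟨σ, b1, b2⟩ := p
      exact ⟨(orth_iff _).mpr (Mat_orth _ _ (gvec_pm σ b1 b2)), gmap_det _,
        Mat_image _ _ (gvec_pm σ b1 b2)⟩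
  rw [hset, Set.ncard_coe_finset, Finset.card_image_of_injective _ gmap_inj, Finset.card_univ]
  simp [Fintype.card_perm]
  norm_num [Nat.factorial]
end

section
/- The rotation symmetry group of the rhombicuboctahedron is isomorphic to the symmetric group on 4 letters: the subgroup of SO(3) consisting of all A with A(V) = V (the stabilizer of the set V under the action of SO(3) on subsets of ℝ³) is isomorphic as a group to Equiv.Perm (Fin 4). -/
lemma act_one : act (1 : Matrix (Fin 3) (Fin 3) ℝ) = id := by
  funext v
  show WithLp.toLp 2 ((1 : Matrix (Fin 3) (Fin 3) ℝ).mulVec v) = v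
  simp

lemma act_mul (A B : Matrix (Fin 3) (Fin 3) ℝ) : act (A * B) = act A ∘ act B := by
  funext v
  show WithLp.toLp 2 ((A * B).mulVec v) = WithLp.toLp 2 (A.mulVec (B.mulVec v))
  rw [Matrix.mulVec_mulVec]

/-- The rotation symmetry group of the set `S ⊆ ℝ³`: the subgroup of the orthogonal
group O(3) consisting of the matrices with determinant 1 mapping `S` onto itself,
i.e. the stabilizer of the set `S` inside SO(3). -/
def rotGroup (S : Set (EuclideanSpace ℝ (Fin 3))) :
    Subgroup (Matrix.orthogonalGroup (Fin 3) ℝ) where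
  carrier := {A | ((A : Matrix (Fin 3) (Fin 3) ℝ)).det = 1 ∧
      act (A : Matrix (Fin 3) (Fin 3) ℝ) '' S = S}
  one_mem' := by
    refine ⟨by simp, ?_⟩
    rw [show ((1 : Matrix.orthogonalGroup (Fin 3) ℝ) : Matrix (Fin 3) (Fin 3) ℝ) = 1 from rfl,
      act_one, Set.image_id]
  mul_mem' := by
    rintro a b ⟨ha1, ha2⟩ ⟨hb1, hb2⟩
    refine ⟨?_, ?_⟩
    · rw [show ((a * b : Matrix.orthogonalGroup (Fin 3) ℝ) : Matrix (Fin 3) (Fin 3) ℝ)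
        = (a : Matrix (Fin 3) (Fin 3) ℝ) * (b : Matrix (Fin 3) (Fin 3) ℝ) from rfl,
        Matrix.det_mul, ha1, hb1, mul_one]
    · rw [show ((a * b : Matrix.orthogonalGroup (Fin 3) ℝ) : Matrix (Fin 3) (Fin 3) ℝ)
        = (a : Matrix (Fin 3) (Fin 3) ℝ) * (b : Matrix (Fin 3) (Fin 3) ℝ) from rfl,
        act_mul, Set.image_comp, hb2, ha2]
  inv_mem' := by
    rintro a ⟨ha1, ha2⟩
    have hinv : ((a⁻¹ : Matrix.orthogonalGroup (Fin 3) ℝ) : Matrix (Fin 3) (Fin 3) ℝ)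
        = star (a : Matrix (Fin 3) (Fin 3) ℝ) := rfl
    refine ⟨?_, ?_⟩
    · rw [hinv, Matrix.star_eq_conjTranspose, Matrix.det_conjTranspose, ha1, star_one]
    · have h1 : act ((a⁻¹ : Matrix.orthogonalGroup (Fin 3) ℝ) : Matrix (Fin 3) (Fin 3) ℝ) ∘
          act ((a : Matrix.orthogonalGroup (Fin 3) ℝ) : Matrix (Fin 3) (Fin 3) ℝ) = id := by
        rw [← act_mul, show ((a⁻¹ : Matrix.orthogonalGroup (Fin 3) ℝ) : Matrix (Fin 3) (Fin 3) ℝ) *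
          (a : Matrix (Fin 3) (Fin 3) ℝ) = ((a⁻¹ * a : Matrix.orthogonalGroup (Fin 3) ℝ) :
            Matrix (Fin 3) (Fin 3) ℝ) from rfl, inv_mul_cancel]
        exact act_one
      calc act (↑a⁻¹) '' S = act (↑a⁻¹) '' (act ↑a '' S) := by rw [ha2]
        _ = (act (↑a⁻¹) ∘ act ↑a) '' S := by rw [Set.image_comp]
        _ = S := by rw [h1, Set.image_id]

open Matrix


/-! Auxiliary: the signed-permutation group and its representation. -/

structure Gt where
  p : Equiv.Perm (Fin 3)
  s : Fin 3 → ZMod 2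
  deriving DecidableEq, Fintype

instance : Mul Gt := ⟨fun g h => ⟨g.p * h.p, fun k => g.s (h.p k) + h.s k⟩⟩
instance : One Gt := ⟨⟨1, 0⟩⟩
instance : Inv Gt := ⟨fun g => ⟨g.p⁻¹, fun k => g.s (g.p⁻¹ k)⟩⟩

@[simp] lemma Gt.mul_p (g h : Gt) : (g * h).p = g.p * h.p := rfl
@[simp] lemma Gt.mul_s (g h : Gt) (k) : (g * h).s k = g.s (h.p k) + h.s k := rfl
@[simp] lemma Gt.one_p : (1 : Gt).p = 1 := rfl
@[simp] lemma Gt.one_s (k) : (1 : Gt).s k = 0 := rfl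
@[simp] lemma Gt.inv_p (g : Gt) : (g⁻¹).p = g.p⁻¹ := rfl
@[simp] lemma Gt.inv_s (g : Gt) (k) : (g⁻¹).s k = g.s (g.p⁻¹ k) := rfl

lemma Gt.ext' {g h : Gt} (h1 : g.p = h.p) (h2 : g.s = h.s) : g = h := by
  cases g; cases h; cases h1; cases h2; rfl

instance : Group Gt where
  mul_assoc a b c := Gt.ext' (mul_assoc _ _ _)
    (by funext k; simp [Equiv.Perm.mul_apply, add_assoc])
  one_mul a := Gt.ext' (one_mul _) (by funext k; simp)
  mul_one a := Gt.ext' (mul_one _) (by funext k; simp)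
  inv_mul_cancel a := Gt.ext' (inv_mul_cancel _)
    (by funext k; simp [Equiv.Perm.mul_apply, CharTwo.add_self_eq_zero])

/-- sign value in a ring -/
def esign {R : Type*} [Ring R] (t : ZMod 2) : R := if t = 0 then 1 else -1

lemma zmod2_cases (t : ZMod 2) : t = 0 ∨ t = 1 := by revert t; decide

lemma esign_add {R : Type*} [Ring R] (a b : ZMod 2) :
    (esign (a + b) : R) = esign a * esign b := by
  rcases zmod2_cases a with rfl | rfl <;> rcases zmod2_cases b with rfl | rfl
  · simp [esign]
  · simp [esign, show (1 : ZMod 2) ≠ 0 by decide]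
  · simp [esign, show (1 : ZMod 2) ≠ 0 by decide]
  · rw [show (1 : ZMod 2) + 1 = 0 by decide]
    simp [esign, show (1 : ZMod 2) ≠ 0 by decide]

lemma esign_mul_self {R : Type*} [Ring R] (a : ZMod 2) :
    (esign a : R) * esign a = 1 := by
  rcases zmod2_cases a with rfl | rfl
  · simp [esign]
  · simp [esign, show (1 : ZMod 2) ≠ 0 by decide]

/-- the signed permutation matrix of `g` over a ring `R` -/
def Mmat (R : Type*) [Ring R] (g : Gt) : Matrix (Fin 3) (Fin 3) R :=
  Matrix.of fun j k => if g.p k = j then esign (g.s k) else 0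

lemma Mmat_one (R : Type*) [Ring R] : Mmat R 1 = 1 := by
  ext j k
  by_cases h : k = j <;> simp [Mmat, h, esign, Matrix.one_apply, eq_comm]

lemma Mmat_mul {R : Type*} [Ring R] (g h : Gt) :
    Mmat R (g * h) = Mmat R g * Mmat R h := by
  ext j k
  rw [Matrix.mul_apply, Finset.sum_eq_single (h.p k)]
  · simp only [Mmat, Matrix.of_apply, Gt.mul_p, Gt.mul_s,
      Equiv.Perm.mul_apply, eq_self_iff_true, if_true]
    by_cases hc : g.p (h.p k) = j
    · simp [hc, esign_add]
    · simp [hc]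
  · intro b _ hb
    simp only [Mmat, Matrix.of_apply]
    rw [if_neg (show ¬ h.p k = b from fun e => hb e.symm), mul_zero]
  · intro habs
    exact absurd (Finset.mem_univ _) habs

lemma Mmat_orth {R : Type*} [Ring R] (g : Gt) :
    (Mmat R g)ᵀ * Mmat R g = 1 := by
  ext i k
  rw [Matrix.mul_apply, Finset.sum_eq_single (g.p i)]
  · simp only [Mmat, Matrix.transpose_apply, Matrix.of_apply, eq_self_iff_true, if_true]
    by_cases h : i = k
    · subst h
      rw [if_pos rfl, esign_mul_self, Matrix.one_apply_eq]
    · rw [if_neg (show ¬ g.p k = g.p i from fun e => h (g.p.injective e).symm), mul_zero,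
        Matrix.one_apply_ne h]
  · intro b _ hb
    simp only [Mmat, Matrix.transpose_apply, Matrix.of_apply]
    rw [if_neg (show ¬ g.p i = b from fun e => hb e.symm), zero_mul]
  · intro habs
    exact absurd (Finset.mem_univ _) habs

lemma mulVec_Mmat {R : Type*} [Ring R] (g : Gt) (x : Fin 3 → R) :
    (Mmat R g).mulVec x = fun j => esign (g.s (g.p⁻¹ j)) * x (g.p⁻¹ j) := by
  funext j
  show ∑ k, (if g.p k = j then (esign (g.s k) : R) else 0) * x k = _
  rw [Finset.sum_eq_single (g.p⁻¹ j)]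
  · rw [if_pos (show g.p (g.p⁻¹ j) = j from g.p.apply_symm_apply j)]
  · intro b _ hb
    rw [if_neg (fun e => hb (by rw [← e, show g.p⁻¹ (g.p b) = b from g.p.symm_apply_apply b])), zero_mul]
  · intro habs
    exact absurd (Finset.mem_univ _) habs

lemma dot_mulVec_mulVec {R : Type*} [CommRing R] {A : Matrix (Fin 3) (Fin 3) R}
    (h : Aᵀ * A = 1) (x y : Fin 3 → R) :
    (A.mulVec x) ⬝ᵥ (A.mulVec y) = x ⬝ᵥ y := by
  rw [Matrix.dotProduct_mulVec, ← Matrix.mulVec_transpose, Matrix.mulVec_mulVec,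
    h, Matrix.one_mulVec]

/-! ℤ√2 data -/

abbrev R2 := Zsqrtd 2

def aZ : R2 := ⟨1, 1⟩
def b0 : Fin 3 → R2 := ![1, 1, aZ]
def qv : Fin 3 → (Fin 3 → R2) := ![![1, 1, aZ], ![1, aZ, 1], ![aZ, 1, 1]]
def pt (g : Gt) : Fin 3 → R2 := (Mmat R2 g).mulVec b0
def cZ : R2 := ⟨3, 2⟩

set_option maxHeartbeats 2000000 in
set_option maxRecDepth 10000 in
theorem L1 : ∀ k2 k3 : Gt,
    (b0 ⬝ᵥ (pt k2) = cZ ∧ b0 ⬝ᵥ (pt k3) = cZ ∧ (pt k2) ⬝ᵥ (pt k3) = cZ) →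
    ∃ g : Gt, b0 = (Mmat R2 g).mulVec (qv 0) ∧ pt k2 = (Mmat R2 g).mulVec (qv 1) ∧
      pt k3 = (Mmat R2 g).mulVec (qv 2) := by decide

theorem Lmain (g1 g2 g3 : Gt)
    (h12 : pt g1 ⬝ᵥ pt g2 = cZ) (h13 : pt g1 ⬝ᵥ pt g3 = cZ)
    (h23 : pt g2 ⬝ᵥ pt g3 = cZ) :
    ∃ g : Gt, pt g1 = (Mmat R2 g).mulVec (qv 0) ∧ pt g2 = (Mmat R2 g).mulVec (qv 1) ∧
      pt g3 = (Mmat R2 g).mulVec (qv 2) := by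
  have key : ∀ k : Gt, pt (g1 * k) = (Mmat R2 g1).mulVec (pt k) := by
    intro k
    show (Mmat R2 (g1 * k)).mulVec b0 = _
    rw [Mmat_mul, ← Matrix.mulVec_mulVec]
    rfl
  have hg1 : ∀ k : Gt, pt g1 ⬝ᵥ pt (g1 * k) = b0 ⬝ᵥ pt k := by
    intro k
    have : pt g1 = (Mmat R2 g1).mulVec b0 := rfl
    rw [this, key, dot_mulVec_mulVec (Mmat_orth g1)]
  have hg2 : ∀ k k' : Gt, pt (g1 * k) ⬝ᵥ pt (g1 * k') = pt k ⬝ᵥ pt k' := by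
    intro k k'
    rw [key, key, dot_mulVec_mulVec (Mmat_orth g1)]
  obtain ⟨g, hA, hB, hC⟩ := L1 (g1⁻¹ * g2) (g1⁻¹ * g3)
    ⟨by rw [← hg1, mul_inv_cancel_left]; exact h12,
     by rw [← hg1, mul_inv_cancel_left]; exact h13,
     by rw [← hg2, mul_inv_cancel_left, mul_inv_cancel_left]; exact h23⟩
  refine ⟨g1 * g, ?_, ?_, ?_⟩
  · show (Mmat R2 g1).mulVec b0 = _
    rw [hA, Matrix.mulVec_mulVec, ← Mmat_mul]
  · rw [← mul_inv_cancel_left g1 g2, key, hB, Matrix.mulVec_mulVec, ← Mmat_mul]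
  · rw [← mul_inv_cancel_left g1 g3, key, hC, Matrix.mulVec_mulVec, ← Mmat_mul]

/-! transfer to ℝ -/

noncomputable def toR : R2 →+* ℝ := Zsqrtd.toReal (by norm_num)

lemma toR_inj : Function.Injective toR := by
  apply Zsqrtd.toReal_injective
  intro n h
  have h1 : n ≤ 1 := by nlinarith
  have h2 : -1 ≤ n := by nlinarith
  interval_cases n <;> omega

lemma toR_esign (t : ZMod 2) : toR (esign t) = esign t := by
  rcases zmod2_cases t with rfl | rfl <;> simp [esign, show (1 : ZMod 2) ≠ 0 by decide]

lemma toR_b0 (j : Fin 3) : toR (b0 j) = base j := by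
  fin_cases j <;> simp [b0, base, aZ, toR, Zsqrtd.toReal_apply]

lemma Mmap (g : Gt) : (Mmat R2 g).map toR = Mmat ℝ g := by
  ext j k
  simp only [Mmat, Matrix.map_apply, Matrix.of_apply]
  split_ifs
  · exact toR_esign _
  · exact map_zero toR

lemma toR_mulVec (M : Matrix (Fin 3) (Fin 3) R2) (x : Fin 3 → R2) :
    (fun j => toR ((M.mulVec x) j)) = (M.map toR).mulVec (fun k => toR (x k)) := by
  funext j
  simp [Matrix.mulVec, dotProduct, Matrix.map_apply, map_sum, _root_.map_mul]

lemma toR_dot (x y : Fin 3 → R2) :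
    toR (x ⬝ᵥ y) = (fun k => toR (x k)) ⬝ᵥ (fun k => toR (y k)) := by
  simp [dotProduct, map_sum, _root_.map_mul]

/-! characterization of V -/

lemma pt_apply (g : Gt) (i : Fin 3) :
    pt g i = esign (g.s (g.p⁻¹ i)) * b0 (g.p⁻¹ i) := by
  show ((Mmat R2 g).mulVec b0) i = _
  rw [mulVec_Mmat]

lemma mem_V_iff_s2 (v : EuclideanSpace ℝ (Fin 3)) :
    v ∈ V ↔ ∃ g : Gt, v = WithLp.toLp 2 (fun i => toR (pt g i)) := by
  constructor
  · rintro ⟨σ, ε, hε, hv⟩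
    refine ⟨⟨σ⁻¹, fun j => if ε (σ⁻¹ j) = 1 then 0 else 1⟩, ?_⟩
    apply PiLp.ext; intro i
    show v i = toR (pt _ i)
    rw [hv i, pt_apply]
    have hp : ((⟨σ⁻¹, fun j => if ε (σ⁻¹ j) = 1 then 0 else 1⟩ : Gt).p)⁻¹ = σ := inv_inv σ
    rw [hp]
    show ε i * base (σ i) = toR (esign (if ε (σ⁻¹ (σ i)) = 1 then 0 else 1) * b0 (σ i))
    rw [_root_.map_mul, toR_esign, toR_b0, show σ⁻¹ (σ i) = i from σ.symm_apply_apply i]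
    rcases hε i with h | h
    · rw [h]; norm_num [esign]
    · rw [h]; norm_num [esign]
  · rintro ⟨g, rfl⟩
    refine ⟨g.p⁻¹, fun i => esign (g.s (g.p⁻¹ i)), fun i => ?_, fun i => ?_⟩
    · by_cases h : g.s (g.p⁻¹ i) = 0
      · left; simp only [esign, if_pos h]
      · right; simp only [esign, if_neg h]
    · show toR (pt g i) = _
      rw [pt_apply, _root_.map_mul, toR_esign, toR_b0]

/-! the character and kernel subgroup -/

def chiFun (g : Gt) : ℤˣ :=
  Equiv.Perm.sign g.p * ∏ i, (if g.s i = 0 then 1 else -1)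

lemma chi_hom (g h : Gt) : chiFun (g * h) = chiFun g * chiFun h := by
  have key : ∀ a b : ZMod 2,
      (if a + b = 0 then (1 : ℤˣ) else -1) =
        (if a = 0 then 1 else -1) * (if b = 0 then 1 else -1) := by decide
  unfold chiFun
  rw [Gt.mul_p, _root_.map_mul]
  have : ∏ i, (if (g * h).s i = 0 then (1 : ℤˣ) else -1)
      = (∏ i, (if g.s (h.p i) = 0 then (1 : ℤˣ) else -1)) *
        ∏ i, (if h.s i = 0 then (1 : ℤˣ) else -1) := by
    rw [← Finset.prod_mul_distrib]
    exact Finset.prod_congr rfl fun i _ => key _ _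
  rw [this, Equiv.prod_comp h.p (fun j => if g.s j = 0 then (1 : ℤˣ) else -1)]
  exact mul_mul_mul_comm _ _ _ _

def chi : Gt →* ℤˣ := MonoidHom.mk' chiFun chi_hom

def G0 : Subgroup Gt := chi.ker

set_option maxRecDepth 10000 in
theorem detZ : ∀ g : Gt, (Mmat R2 g).det = ((chiFun g : ℤ) : R2) := by decide

lemma detR (g : Gt) : (Mmat ℝ g).det = ((chiFun g : ℤ) : ℝ) := by
  rw [← Mmap, ← RingHom.mapMatrix_apply, ← RingHom.map_det, detZ, map_intCast]

/-! the homomorphism into the orthogonal group -/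

noncomputable def Phi : Gt →* Matrix.orthogonalGroup (Fin 3) ℝ :=
  MonoidHom.mk' (fun g => ⟨Mmat ℝ g, by
    rw [Matrix.mem_orthogonalGroup_iff]
    have : star (Mmat ℝ g) = (Mmat ℝ g)ᵀ := by
      simp [Matrix.star_eq_conjTranspose]
    rw [mul_eq_one_comm]
    exact Mmat_orth g⟩)
    (fun a b => Subtype.ext (Mmat_mul a b))

set_option maxRecDepth 10000 in
theorem MinjZ : ∀ g g' : Gt, Mmat R2 g = Mmat R2 g' → g = g' := by decide

lemma Phi_inj : Function.Injective Phi := by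
  intro g g' h
  apply MinjZ
  have hR : Mmat ℝ g = Mmat ℝ g' := congrArg Subtype.val h
  refine Matrix.ext fun j k => toR_inj ?_
  have := congrFun (congrFun hR j) k
  rw [← Mmap, ← Mmap] at this
  exact this

/-! V is stable under the image matrices -/

lemma toR_pt_mul (h k : Gt) :
    WithLp.toLp 2 (fun i => toR (pt (h * k) i)) =
      act (Mmat ℝ h) (WithLp.toLp 2 (fun i => toR (pt k i))) := by
  show WithLp.toLp 2 _ = WithLp.toLp 2 ((Mmat ℝ h).mulVec (fun i => toR (pt k i)))
  congr 1
  rw [← Mmap, ← toR_mulVec]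
  have : (Mmat R2 h).mulVec (pt k) = pt (h * k) := by
    show _ = (Mmat R2 (h * k)).mulVec b0
    rw [Mmat_mul, ← Matrix.mulVec_mulVec]
    rfl
  rw [this]

lemma image_V (g : Gt) : act (Mmat ℝ g) '' V = V := by
  have sub : ∀ h : Gt, act (Mmat ℝ h) '' V ⊆ V := by
    rintro h _ ⟨v, hv, rfl⟩
    obtain ⟨k, rfl⟩ := (mem_V_iff_s2 v).mp hv
    exact (mem_V_iff_s2 _).mpr ⟨h * k, (toR_pt_mul h k).symm⟩
  refine Set.Subset.antisymm (sub g) ?_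
  intro v hv
  obtain ⟨k, rfl⟩ := (mem_V_iff_s2 v).mp hv
  refine ⟨WithLp.toLp 2 (fun i => toR (pt (g⁻¹ * k) i)), (mem_V_iff_s2 _).mpr ⟨g⁻¹ * k, rfl⟩, ?_⟩
  rw [← toR_pt_mul, mul_inv_cancel_left]

/-! decidable facts about the triangle -/

theorem q_pt : qv 0 = pt 1 ∧ qv 1 = pt ⟨Equiv.swap 1 2, 0⟩ ∧ qv 2 = pt ⟨Equiv.swap 0 2, 0⟩ := by
  decide

theorem q_dot : qv 0 ⬝ᵥ qv 1 = cZ ∧ qv 0 ⬝ᵥ qv 2 = cZ ∧ qv 1 ⬝ᵥ qv 2 = cZ := by decide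

def Bq : Matrix (Fin 3) (Fin 3) R2 := Matrix.of fun j i => qv i j

theorem detBq : Bq.det ≠ 0 := by decide

/-! the hard inclusion -/

theorem main_sub (A : Matrix.orthogonalGroup (Fin 3) ℝ) (hA : A ∈ rotGroup V) :
    ∃ g : Gt, chiFun g = 1 ∧ (A : Matrix (Fin 3) (Fin 3) ℝ) = Mmat ℝ g := by
  obtain ⟨hdet, himg⟩ := hA
  set Am := (A : Matrix (Fin 3) (Fin 3) ℝ) with hAm
  have horth : Amᵀ * Am = 1 := by
    have := A.2
    rw [Matrix.mem_orthogonalGroup_iff'] at this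
    have hstar : star Am = Amᵀ := by simp [Matrix.star_eq_conjTranspose]
    exact this
  -- the three triangle vertices
  set v0 : EuclideanSpace ℝ (Fin 3) := WithLp.toLp 2 (fun i => toR (qv 0 i)) with hv0
  set v1 : EuclideanSpace ℝ (Fin 3) := WithLp.toLp 2 (fun i => toR (qv 1 i)) with hv1
  set v2 : EuclideanSpace ℝ (Fin 3) := WithLp.toLp 2 (fun i => toR (qv 2 i)) with hv2
  have hv0V : v0 ∈ V := (mem_V_iff_s2 _).mpr ⟨1, by rw [hv0, q_pt.1]⟩
  have hv1V : v1 ∈ V := (mem_V_iff_s2 _).mpr ⟨_, by rw [hv1, q_pt.2.1]⟩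
  have hv2V : v2 ∈ V := (mem_V_iff_s2 _).mpr ⟨_, by rw [hv2, q_pt.2.2]⟩
  have himg' : ∀ v ∈ V, act Am v ∈ V := by
    intro v hv
    rw [← himg]
    exact Set.mem_image_of_mem _ hv
  obtain ⟨g0, hg0⟩ := (mem_V_iff_s2 _).mp (himg' v0 hv0V)
  obtain ⟨g1, hg1⟩ := (mem_V_iff_s2 _).mp (himg' v1 hv1V)
  obtain ⟨g2, hg2⟩ := (mem_V_iff_s2 _).mp (himg' v2 hv2V)
  -- dot products
  have dotq : ∀ (a b : Fin 3), qv a ⬝ᵥ qv b = cZ →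
      pt ((![g0, g1, g2]) a) ⬝ᵥ pt ((![g0, g1, g2]) b) = cZ := by
    intro a b hab
    apply toR_inj
    rw [toR_dot]
    have key : ∀ c : Fin 3, (fun k => toR (pt ((![g0, g1, g2]) c) k))
        = (act Am (WithLp.toLp 2 (fun i => toR (qv c i)))).ofLp := by
      intro c
      fin_cases c
      · exact congrArg WithLp.ofLp hg0.symm
      · exact congrArg WithLp.ofLp hg1.symm
      · exact congrArg WithLp.ofLp hg2.symm
    rw [key a, key b]
    show (Am.mulVec fun i => toR (qv a i)) ⬝ᵥ (Am.mulVec fun i => toR (qv b i)) = toR cZ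
    rw [dot_mulVec_mulVec horth, ← toR_dot, hab]
  obtain ⟨g, hq0, hq1, hq2⟩ := Lmain g0 g1 g2
    (dotq 0 1 q_dot.1) (dotq 0 2 q_dot.2.1) (dotq 1 2 q_dot.2.2)
  -- A agrees with Mmat ℝ g on the basis
  have hagree : ∀ c : Fin 3, Am.mulVec (fun i => toR (qv c i))
      = (Mmat ℝ g).mulVec (fun i => toR (qv c i)) := by
    intro c
    have h1 : Am.mulVec (fun i => toR (qv c i)) = fun i => toR (pt ((![g0, g1, g2]) c) i) := by
      fin_cases c
      · exact congrArg WithLp.ofLp hg0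
      · exact congrArg WithLp.ofLp hg1
      · exact congrArg WithLp.ofLp hg2
    have h2 : pt ((![g0, g1, g2]) c) = (Mmat R2 g).mulVec (qv c) := by
      fin_cases c
      · exact hq0
      · exact hq1
      · exact hq2
    rw [h1, h2, toR_mulVec, Mmap]
  -- conclude matrix equality via invertibility of Bq
  have hBmat : Am * (Bq.map toR) = Mmat ℝ g * (Bq.map toR) := by
    ext j i
    have e1 : (Am * (Bq.map toR)) j i = (Am.mulVec (fun k => toR (qv i k))) j := by
      simp [Matrix.mul_apply, Matrix.mulVec, dotProduct, Bq, Matrix.map_apply]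
    have e2 : ((Mmat ℝ g) * (Bq.map toR)) j i
        = ((Mmat ℝ g).mulVec (fun k => toR (qv i k))) j := by
      simp [Matrix.mul_apply, Matrix.mulVec, dotProduct, Bq, Matrix.map_apply]
    rw [e1, e2, hagree i]
  have hBunit : IsUnit (Bq.map toR) := by
    rw [Matrix.isUnit_iff_isUnit_det, isUnit_iff_ne_zero, ← RingHom.mapMatrix_apply,
      ← RingHom.map_det]
    intro h
    exact detBq (toR_inj (by rw [h, map_zero]))
  have hAeq : Am = Mmat ℝ g := hBunit.mul_right_cancel hBmat
  refine ⟨g, ?_, hAeq⟩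
  -- determinant condition
  have : ((chiFun g : ℤ) : ℝ) = 1 := by
    rw [← detR, ← hAeq, hdet]
  rcases Int.units_eq_one_or (chiFun g) with h | h
  · exact h
  · rw [h] at this; norm_num at this

/-! the permutation action on the four diagonals -/

def Fd (g : Gt) (d : Fin 3 → ZMod 2) : Fin 3 → ZMod 2 := fun j => g.s (g.p⁻¹ j) + d (g.p⁻¹ j)

lemma Fd_mul (g h : Gt) (d) : Fd (g * h) d = Fd g (Fd h d) := by
  funext j
  simp [Fd, _root_.mul_inv_rev, Equiv.Perm.mul_apply, add_assoc]

def Fc (g : Gt) (x : ZMod 2 × ZMod 2) : ZMod 2 × ZMod 2 :=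
  let d' := Fd g ![0, x.1, x.2]
  (d' 1 + d' 0, d' 2 + d' 0)

lemma Fd_shift (g : Gt) (d : Fin 3 → ZMod 2) (c : ZMod 2) :
    Fd g (fun j => d j + c) = fun j => Fd g d j + c := by
  funext j; simp [Fd, add_assoc]

lemma z2cancel (a b c : ZMod 2) : (a + c) + (b + c) = a + b := by
  fin_cases a <;> fin_cases b <;> fin_cases c <;> rfl

theorem Fc_mul (g h : Gt) (x) : Fc (g * h) x = Fc g (Fc h x) := by
  have key : ∀ (D : Fin 3 → ZMod 2),
      (![(0 : ZMod 2), D 1 + D 0, D 2 + D 0] : Fin 3 → ZMod 2) = fun j => D j + D 0 := by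
    intro D; funext j; fin_cases j <;> simp [CharTwo.add_self_eq_zero]
  show (let d' := Fd (g * h) ![0, x.1, x.2]; (d' 1 + d' 0, d' 2 + d' 0))
     = (let d' := Fd g ![0, (Fc h x).1, (Fc h x).2]; (d' 1 + d' 0, d' 2 + d' 0))
  have h2 : (![(0 : ZMod 2), (Fc h x).1, (Fc h x).2]) =
      fun j => Fd h ![0, x.1, x.2] j + Fd h ![0, x.1, x.2] 0 := key _
  rw [h2, Fd_shift, Fd_mul]
  dsimp only
  simp only [Prod.mk.injEq]
  exact ⟨(z2cancel _ _ _).symm, (z2cancel _ _ _).symm⟩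

theorem Fc_one : ∀ x, Fc 1 x = x := by decide

noncomputable def theta : Gt →* Equiv.Perm (ZMod 2 × ZMod 2) :=
  MonoidHom.mk' (fun g => ⟨Fc g, Fc g⁻¹,
    fun x => by rw [← Fc_mul, inv_mul_cancel, Fc_one],
    fun x => by rw [← Fc_mul, mul_inv_cancel, Fc_one]⟩)
    (fun a b => Equiv.ext (Fc_mul a b))

theorem Hker : ∀ g : Gt, (∀ x, Fc g x = x) → chiFun g = 1 →
    (∀ i, g.p i = i) ∧ (∀ i, g.s i = 0) := by decide

set_option maxRecDepth 10000 in
theorem Hsurj : ∀ p : Equiv.Perm (ZMod 2 × ZMod 2),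
    ∃ g : Gt, chiFun g = 1 ∧ ∀ x, Fc g x = p x := by decide

noncomputable def theta0 : G0 →* Equiv.Perm (ZMod 2 × ZMod 2) :=
  theta.comp G0.subtype

lemma theta0_bij : Function.Bijective theta0 := by
  constructor
  · rw [injective_iff_map_eq_one]
    rintro ⟨g, hg⟩ h
    have hfix : ∀ x, Fc g x = x := by
      intro x
      have := congrArg (fun (p : Equiv.Perm (ZMod 2 × ZMod 2)) => p x) h
      exact this
    obtain ⟨hp, hs⟩ := Hker g hfix hg
    exact Subtype.ext (Gt.ext' (Equiv.ext hp) (funext hs))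
  · intro p
    obtain ⟨g, hchi, hF⟩ := Hsurj p
    exact ⟨⟨g, show chi g = 1 from hchi⟩, Equiv.ext hF⟩

/-! assembling the isomorphism -/

def e4 : (ZMod 2 × ZMod 2) ≃ Fin 4 where
  toFun x := if x = (0, 0) then 0 else if x = (0, 1) then 1 else if x = (1, 0) then 2 else 3
  invFun := ![(0, 0), (0, 1), (1, 0), (1, 1)]
  left_inv := by decide
  right_inv := by decide

def permMulEquiv : Equiv.Perm (ZMod 2 × ZMod 2) ≃* Equiv.Perm (Fin 4) :=
  { Equiv.permCongr e4 with
    map_mul' := by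
      intro a b
      ext x
      simp [Equiv.permCongr_apply, Equiv.Perm.mul_apply] }

lemma rot_eq_map : rotGroup V = Subgroup.map Phi G0 := by
  ext A
  constructor
  · intro hA
    obtain ⟨g, hchi, hAeq⟩ := main_sub A hA
    refine ⟨g, show chi g = 1 from hchi, ?_⟩
    exact Subtype.ext hAeq.symm
  · rintro ⟨g, hg, rfl⟩
    refine ⟨?_, ?_⟩
    · show (Mmat ℝ g).det = 1
      rw [detR]
      have : chiFun g = 1 := hg
      rw [this]
      norm_num
    · exact image_V g

theorem rhombicuboctahedron_rotation_group_iso_symm_group' :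
    Nonempty ((rotGroup V) ≃* Equiv.Perm (Fin 4)) := by
  refine ⟨?_⟩
  have e1 : rotGroup V ≃* Subgroup.map Phi G0 := MulEquiv.subgroupCongr rot_eq_map
  have e2 : G0 ≃* Subgroup.map Phi G0 := Subgroup.equivMapOfInjective G0 Phi Phi_inj
  have e3 : G0 ≃* Equiv.Perm (ZMod 2 × ZMod 2) := MulEquiv.ofBijective theta0 theta0_bij
  exact e1.trans (e2.symm.trans (e3.trans permMulEquiv))

/-- The rotation symmetry group of the rhombicuboctahedron is isomorphic to the
symmetric group on 4 letters. -/
theorem rhombicuboctahedron_rotation_group_iso_symm_group :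
    Nonempty ((rotGroup V) ≃* Equiv.Perm (Fin 4)) :=
  rhombicuboctahedron_rotation_group_iso_symm_group'
end

section
/- The rhombicuboctahedron is vertex-transitive under its rotation group: for any two points u, v ∈ V there exists a matrix A in SO(3) with A(V) = V and A·u = v. -/
open Matrix Equiv

def smat (σ τ : Equiv.Perm (Fin 3)) (ε δ : Fin 3 → ℝ) : Matrix (Fin 3) (Fin 3) ℝ :=
  Matrix.of fun i j => if σ j = τ i then δ i * ε j else 0

lemma smat_eq (σ τ : Equiv.Perm (Fin 3)) (ε δ : Fin 3 → ℝ) :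
    smat σ τ ε δ = Matrix.diagonal δ * (Equiv.Perm.permMatrix ℝ (σ⁻¹ * τ)) * Matrix.diagonal ε := by
  ext i j
  simp only [smat, Matrix.diagonal_mul, Matrix.mul_diagonal,
    Equiv.Perm.permMatrix, PEquiv.toMatrix_apply, Equiv.toPEquiv_apply, Equiv.Perm.mul_apply,
    Option.mem_def, Option.some.injEq, Matrix.of_apply]
  by_cases h : σ j = τ i
  · rw [if_pos h, if_pos (by rw [← h]; exact σ.symm_apply_apply j)]; ring
  · rw [if_neg h, if_neg (by intro hc; apply h; rw [← hc]; exact σ.apply_symm_apply _), mul_zero,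
      zero_mul]

lemma mulVec_smat (σ τ : Equiv.Perm (Fin 3)) (ε δ : Fin 3 → ℝ) (w : Fin 3 → ℝ) (i : Fin 3) :
    (smat σ τ ε δ).mulVec w i = δ i * (ε (σ.symm (τ i)) * w (σ.symm (τ i))) := by
  simp only [Matrix.mulVec, dotProduct, smat, Matrix.of_apply, ite_mul, zero_mul]
  have : ∀ j, (σ j = τ i) = (j = σ.symm (τ i)) := by
    intro j; rw [eq_iff_iff, ← Equiv.apply_eq_iff_eq_symm_apply]
  simp only [this]
  rw [Finset.sum_ite_eq' Finset.univ (σ.symm (τ i)) (fun j => δ i * ε j * w j),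
    if_pos (Finset.mem_univ _)]
  ring

lemma smat_transpose (σ τ : Equiv.Perm (Fin 3)) (ε δ : Fin 3 → ℝ) :
    (smat σ τ ε δ)ᵀ = smat τ σ δ ε := by
  ext i j
  simp only [Matrix.transpose_apply, smat, Matrix.of_apply]
  by_cases h : σ i = τ j
  · rw [if_pos h, if_pos h.symm]; ring
  · rw [if_neg h, if_neg fun hc => h hc.symm]

lemma smat_mul_transpose (σ τ : Equiv.Perm (Fin 3)) (ε δ : Fin 3 → ℝ)
    (hε : ∀ i, ε i = 1 ∨ ε i = -1) (hδ : ∀ i, δ i = 1 ∨ δ i = -1) :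
    smat σ τ ε δ * (smat σ τ ε δ)ᵀ = 1 := by
  ext i k
  rw [Matrix.mul_apply, smat_transpose]
  simp only [smat, Matrix.of_apply, ite_mul, mul_ite, zero_mul, mul_zero]
  have : ∀ j, (σ j = τ i) = (j = σ.symm (τ i)) := by
    intro j; rw [eq_iff_iff, ← Equiv.apply_eq_iff_eq_symm_apply]
  simp only [this]
  have comm : ∀ x : Fin 3,
      (if τ k = σ x then if x = σ.symm (τ i) then δ i * ε x * (ε x * δ k) else 0 else 0) =
      if x = σ.symm (τ i) then (if τ k = σ x then δ i * ε x * (ε x * δ k) else 0) else 0 := by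
    intro x; by_cases h1 : τ k = σ x <;> by_cases h2 : x = σ.symm (τ i) <;> simp [h1, h2]
  simp only [comm]
  rw [Finset.sum_ite_eq' Finset.univ (σ.symm (τ i))
    (fun j => if τ k = σ j then δ i * ε j * (ε j * δ k) else 0), if_pos (Finset.mem_univ _)]
  rw [Equiv.apply_symm_apply]
  have hsq : ε (σ.symm (τ i)) * ε (σ.symm (τ i)) = 1 := by
    rcases hε (σ.symm (τ i)) with h | h <;> rw [h] <;> norm_num
  by_cases hik : k = i
  · subst hik
    rw [if_pos rfl, Matrix.one_apply_eq]
    rcases hδ k with h | h <;> rw [h] <;> nlinarith [hsq]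
  · rw [if_neg (fun hc => hik (τ.injective hc)),
      Matrix.one_apply_ne fun hc => hik hc.symm]

lemma smat_mem (σ τ : Equiv.Perm (Fin 3)) (ε δ : Fin 3 → ℝ)
    (hε : ∀ i, ε i = 1 ∨ ε i = -1) (hδ : ∀ i, δ i = 1 ∨ δ i = -1) :
    smat σ τ ε δ ∈ Matrix.orthogonalGroup (Fin 3) ℝ := by
  rw [Matrix.mem_orthogonalGroup_iff]
  simpa using smat_mul_transpose σ τ ε δ hε hδ

lemma det_smat (σ τ : Equiv.Perm (Fin 3)) (ε δ : Fin 3 → ℝ) :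
    (smat σ τ ε δ).det =
      (∏ i, δ i) * ((Equiv.Perm.sign (σ⁻¹ * τ) : ℤ) : ℝ) * ∏ i, ε i := by
  rw [smat_eq, Matrix.det_mul, Matrix.det_mul, Matrix.det_diagonal, Matrix.det_diagonal,
    Matrix.det_permutation]

lemma smat_mapsTo (σ τ : Equiv.Perm (Fin 3)) (ε δ : Fin 3 → ℝ)
    (hε : ∀ i, ε i = 1 ∨ ε i = -1) (hδ : ∀ i, δ i = 1 ∨ δ i = -1) :
    ∀ w ∈ V, act (smat σ τ ε δ) w ∈ V := by
  rintro w ⟨ρ, η, hη, hw⟩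
  refine ⟨(τ.trans σ.symm).trans ρ, fun i => δ i * (ε (σ.symm (τ i)) * η (σ.symm (τ i))), ?_, ?_⟩
  · intro i
    dsimp only
    rcases hδ i with h1 | h1 <;> rcases hε (σ.symm (τ i)) with h2 | h2 <;>
      rcases hη (σ.symm (τ i)) with h3 | h3 <;> rw [h1, h2, h3] <;> norm_num
  · intro i
    show (smat σ τ ε δ).mulVec w i = _
    rw [mulVec_smat, hw (σ.symm (τ i))]
    simp only [Equiv.trans_apply]
    ring

lemma base_swap (x : Fin 3) : base (Equiv.swap 0 1 x) = base x := by
  fin_cases x <;> simp [base, Equiv.swap_apply_def]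

lemma key_lemma (σ τ : Equiv.Perm (Fin 3)) (ε δ : Fin 3 → ℝ)
    (hε : ∀ i, ε i = 1 ∨ ε i = -1) (hδ : ∀ i, δ i = 1 ∨ δ i = -1)
    (u v : EuclideanSpace ℝ (Fin 3))
    (hu : ∀ i, u i = ε i * base (σ i)) (hv : ∀ i, v i = δ i * base (τ i)) :
    smat σ τ ε δ ∈ Matrix.orthogonalGroup (Fin 3) ℝ ∧
      act (smat σ τ ε δ) '' V = V ∧ act (smat σ τ ε δ) u = v := by
  refine ⟨smat_mem σ τ ε δ hε hδ, ?_, ?_⟩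
  · apply Set.Subset.antisymm
    · rintro x ⟨w, hw, rfl⟩
      exact smat_mapsTo σ τ ε δ hε hδ w hw
    · intro w hw
      refine ⟨act (smat τ σ δ ε) w, smat_mapsTo τ σ δ ε hδ hε w hw, ?_⟩
      show WithLp.toLp 2 ((smat σ τ ε δ).mulVec ((smat τ σ δ ε).mulVec w)) = w
      rw [Matrix.mulVec_mulVec, ← smat_transpose σ τ ε δ, smat_mul_transpose σ τ ε δ hε hδ,
        Matrix.one_mulVec]
  · ext i
    show (smat σ τ ε δ).mulVec u i = v i
    rw [mulVec_smat, hu (σ.symm (τ i)), Equiv.apply_symm_apply, hv i]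
    rcases hε (σ.symm (τ i)) with h | h <;> rw [h] <;> ring


/-- The rhombicuboctahedron is vertex-transitive under its rotation group: for any two
vertices `u, v ∈ V` there is a matrix `A ∈ SO(3)` with `A(V) = V` and `A·u = v`. -/
theorem rhombicuboctahedron_vertex_transitive :
    ∀ u ∈ V, ∀ v ∈ V, ∃ A : Matrix (Fin 3) (Fin 3) ℝ,
      A ∈ Matrix.orthogonalGroup (Fin 3) ℝ ∧ A.det = 1 ∧ act A '' V = V ∧ act A u = v := by
  rintro u ⟨σ, ε, hε, hu⟩ v ⟨τ, δ, hδ, hv⟩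
  set σ' : Equiv.Perm (Fin 3) := σ.trans (Equiv.swap 0 1) with hσ'
  have hmul : σ' = Equiv.swap 0 1 * σ := rfl
  have hu' : ∀ i, u i = ε i * base (σ' i) := by
    intro i
    rw [hu i, hσ']
    show _ = ε i * base (Equiv.swap 0 1 (σ i))
    rw [base_swap]
  have hdet2 : (smat σ τ ε δ).det = 1 ∨ (smat σ τ ε δ).det = -1 := by
    have h1 : (smat σ τ ε δ).det * (smat σ τ ε δ).det = 1 := by
      have := congrArg Matrix.det (smat_mul_transpose σ τ ε δ hε hδ)
      rwa [Matrix.det_mul, Matrix.det_transpose, Matrix.det_one] at this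
    exact mul_self_eq_one_iff.mp h1
  have hsign : (((Equiv.Perm.sign (σ'⁻¹ * τ)) : ℤ) : ℝ) =
      -(((Equiv.Perm.sign (σ⁻¹ * τ)) : ℤ) : ℝ) := by
    rw [hmul, _root_.mul_inv_rev, mul_assoc]
    rw [_root_.map_mul, _root_.map_mul]
    simp only [map_inv, Equiv.Perm.sign_swap (by decide : (0 : Fin 3) ≠ 1), inv_neg,
      inv_one, _root_.map_mul, Equiv.Perm.sign_inv]
    push_cast
    ring
  rcases hdet2 with hd | hd
  · obtain ⟨h1, h2, h3⟩ := key_lemma σ τ ε δ hε hδ u v hu hv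
    exact ⟨smat σ τ ε δ, h1, hd, h2, h3⟩
  · obtain ⟨h1, h2, h3⟩ := key_lemma σ' τ ε δ hε hδ u v hu' hv
    refine ⟨smat σ' τ ε δ, h1, ?_, h2, h3⟩
    rw [det_smat, hsign]
    rw [det_smat] at hd
    linarith
end
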